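/- arXiv:1105.1888 — 2 statements merged into one kernel-verified Lean document; each statement's English description precedes it below -/
import Mathlib

section
/- Let 1 ≤ h ≤ n−1 and 0 < α < a, and consider S_a^3 = Σ_a ∩ {x ∈ ℝ^n : x_i ≤ α for i = h+1,...,n}. If α ≥ a/n, the minimal element of S_a^3 with respect to the majorization order is (a/n) s^n. If α < a/n, the minimal element is ρ s^h + α v^h with ρ = (a − (n−h)α)/h. -/
open Finset

noncomputable section

/-- `sv n j` is the vector `s^j ∈ ℝ^n`: first `j` components equal `1`, the rest `0`. -/
def sv (n j : ℕ) : Fin n → ℝ := fun i => if (i : ℕ) < j then 1 else 0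

/-- `vv n j = s^n - s^j`: first `j` components equal `0`, the rest `1`. -/
def vv (n j : ℕ) : Fin n → ℝ := fun i => if (i : ℕ) < j then 0 else 1

/-- `ev n j` is the `j`-th standard basis vector (`j` counted from `1`). -/
def ev (n j : ℕ) : Fin n → ℝ := fun i => if (i : ℕ) + 1 = j then 1 else 0

/-- Standard inner product on `ℝ^n`. -/
def inn {n : ℕ} (x y : Fin n → ℝ) : ℝ := ∑ i, x i * y i

/-- Hadamard (componentwise) product. -/
def had {n : ℕ} (x y : Fin n → ℝ) : Fin n → ℝ := fun i => x i * y i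

/-- Sum of the first `k` components. -/
def psum {n : ℕ} (x : Fin n → ℝ) (k : ℕ) : ℝ := ∑ i : Fin n, if (i : ℕ) < k then x i else 0

/-- Majorization order: `x ⊴ y` (for vectors with nonincreasing components). -/
def Maj {n : ℕ} (x y : Fin n → ℝ) : Prop :=
  (∀ k : ℕ, 1 ≤ k → k ≤ n - 1 → psum x k ≤ psum y k) ∧ (∑ i, x i = ∑ i, y i)

/-- `Σ_a = {x ∈ ℝ^n : x_1 ≥ ... ≥ x_n ≥ 0, Σ x_i = a}`. -/
def SigmaSet (n : ℕ) (a : ℝ) : Set (Fin n → ℝ) :=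
  {x | (∀ i j : Fin n, i ≤ j → x j ≤ x i) ∧ (∀ i, 0 ≤ x i) ∧ (∑ i, x i = a)}

/-- `S_a^[h] = Σ_a ∩ {x : M₁ ≥ x_1 ≥ ... ≥ x_h ≥ m₁, M₂ ≥ x_{h+1} ≥ ... ≥ x_n ≥ m₂}`. -/
def Sh (n h : ℕ) (a M1 M2 m1 m2 : ℝ) : Set (Fin n → ℝ) :=
  SigmaSet n a ∩
    {x | (∀ i : Fin n, (i : ℕ) < h → m1 ≤ x i ∧ x i ≤ M1) ∧
         (∀ i : Fin n, h ≤ (i : ℕ) → m2 ≤ x i ∧ x i ≤ M2)}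

/-- `S_a^3 = Σ_a ∩ {x : x_i ≤ α, i = h+1,...,n}`. -/
def S3 (n h : ℕ) (a α : ℝ) : Set (Fin n → ℝ) :=
  SigmaSet n a ∩ {x | ∀ i : Fin n, h ≤ (i : ℕ) → x i ≤ α}

lemma psum_succ {n : ℕ} (x : Fin n → ℝ) {m : ℕ} (hm : m < n) :
    psum x (m + 1) = psum x m + x ⟨m, hm⟩ := by
  unfold psum
  have key : ∀ i : Fin n, (if (i : ℕ) < m + 1 then x i else 0)
      = (if (i : ℕ) < m then x i else 0) + (if i = ⟨m, hm⟩ then x i else 0) := by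
    intro i
    rcases lt_trichotomy (i : ℕ) m with hc | hc | hc
    · have h1 : (i : ℕ) < m + 1 := by omega
      have hne : i ≠ ⟨m, hm⟩ := by
        intro he; rw [he] at hc; simp at hc
      simp [h1, hc, hne]
    · have he : i = ⟨m, hm⟩ := Fin.ext hc
      have h1 : (i : ℕ) < m + 1 := by omega
      have h2 : ¬ (i : ℕ) < m := by omega
      simp [he, h1, h2]
    · have h1 : ¬ (i : ℕ) < m + 1 := by omega
      have h2 : ¬ (i : ℕ) < m := by omega
      have hne : i ≠ ⟨m, hm⟩ := by
        intro he; rw [he] at hc; simp at hc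
      simp [h1, h2, hne]
  rw [Finset.sum_congr rfl (fun i _ => key i), Finset.sum_add_distrib]
  simp

lemma psum_total {n : ℕ} (x : Fin n → ℝ) : psum x n = ∑ i, x i := by
  unfold psum
  exact Finset.sum_congr rfl (fun i _ => by simp [i.isLt])

lemma psum_const {n : ℕ} (c : ℝ) : ∀ k, k ≤ n → psum (fun _ : Fin n => c) k = k * c := by
  intro k
  induction k with
  | zero => intro _; simp [psum]
  | succ k ih =>
    intro hk
    rw [psum_succ _ (by omega : k < n), ih (by omega)]
    push_cast; ring

lemma psum_piece {n : ℕ} (h : ℕ) (ρ α : ℝ) :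
    ∀ k, k ≤ n → psum (fun i : Fin n => if (i : ℕ) < h then ρ else α) k
      = ((min k h : ℕ) : ℝ) * ρ + ((k : ℝ) - ((min k h : ℕ) : ℝ)) * α := by
  intro k
  induction k with
  | zero => intro _; simp [psum]
  | succ k ih =>
    intro hk
    rw [psum_succ _ (by omega : k < n), ih (by omega)]
    by_cases hkh : k < h
    · rw [min_eq_left (le_of_lt hkh), min_eq_left (by omega : k + 1 ≤ h)]
      simp only [hkh, if_pos]
      push_cast; ring
    · rw [min_eq_right (by omega : h ≤ k), min_eq_right (by omega : h ≤ k + 1)]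
      simp only [hkh, if_neg, if_false]
      push_cast; ring

lemma psum_avg {n : ℕ} (x : Fin n → ℝ) (hs : ∀ i j : Fin n, i ≤ j → x j ≤ x i)
    {k m : ℕ} (hk : k ≤ m) (hm : m ≤ n) :
    (k : ℝ) * psum x m ≤ (m : ℝ) * psum x k := by
  revert hm
  induction m, hk using Nat.le_induction with
  | base => intro _; exact le_of_eq rfl
  | succ m hkm ih =>
    intro hm
    have hmn : m < n := by omega
    rw [psum_succ x hmn]
    have h1 : (k : ℝ) * x ⟨m, hmn⟩ ≤ psum x k := by
      have hle : psum (fun _ : Fin n => x ⟨m, hmn⟩) k ≤ psum x k := by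
        unfold psum
        apply Finset.sum_le_sum
        intro i _
        by_cases hik : (i : ℕ) < k
        · simp only [hik, if_pos]
          exact hs i ⟨m, hmn⟩ (by simp [Fin.le_def]; omega)
        · simp [hik]
      rwa [psum_const _ k (by omega)] at hle
    have ih' := ih (by omega)
    push_cast
    nlinarith

lemma tail_bound {n h : ℕ} (x : Fin n → ℝ) (α : ℝ)
    (hx : ∀ i : Fin n, h ≤ (i : ℕ) → x i ≤ α) {k : ℕ} (hk1 : h ≤ k) (hk2 : k ≤ n) :
    (∑ i, x i) - ((n : ℝ) - k) * α ≤ psum x k := by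
  have h1 : (∑ i, x i) - psum x k = ∑ i : Fin n, (if (i : ℕ) < k then 0 else x i) := by
    unfold psum
    rw [← Finset.sum_sub_distrib]
    apply Finset.sum_congr rfl
    intro i _
    by_cases hik : (i : ℕ) < k <;> simp [hik]
  have h2 : ∑ i : Fin n, (if (i : ℕ) < k then (0:ℝ) else x i) ≤ ((n : ℝ) - k) * α := by
    have hcα : ∑ i : Fin n, (if (i : ℕ) < k then (0:ℝ) else α) = ((n:ℝ) - k) * α := by
      have hc := psum_const (n := n) α k hk2
      simp only [psum] at hc
      have htot : ∑ _i : Fin n, α = (n : ℝ) * α := by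
        simp [Finset.sum_const, Finset.card_univ, mul_comm]
      calc ∑ i : Fin n, (if (i : ℕ) < k then (0:ℝ) else α)
          = ∑ i : Fin n, (α - if (i : ℕ) < k then α else 0) := by
            apply Finset.sum_congr rfl
            intro i _
            by_cases hik : (i : ℕ) < k <;> simp [hik]
        _ = (n : ℝ) * α - (k : ℝ) * α := by
            rw [Finset.sum_sub_distrib, hc, htot]
        _ = ((n:ℝ) - k) * α := by ring
    rw [← hcα]
    apply Finset.sum_le_sum
    intro i _
    by_cases hik : (i : ℕ) < k
    · simp [hik]
    · simp only [hik, if_neg, if_false]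
      exact hx i (by omega)
  linarith


/-- Minimal element of `S_a^3`: `(a/n) s^n` if `α ≥ a/n`, and `ρ s^h + α v^h` with
`ρ = (a - (n-h)α)/h` if `α < a/n`. -/
theorem minimal_element_of_S3 (n h : ℕ) (hh : 1 ≤ h) (hhn : h ≤ n - 1)
    (a α : ℝ) (ha : 0 < a) (hα : 0 < α) (hαa : α < a) :
    (a / n ≤ α →
      ∀ xmin : Fin n → ℝ, xmin = (fun _ => a / n) →
        xmin ∈ S3 n h a α ∧ ∀ x ∈ S3 n h a α, Maj xmin x) ∧
    (α < a / n →
      ∀ xmin : Fin n → ℝ, xmin = (fun i => (a - ((n : ℝ) - h) * α) / h * sv n h i + α * vv n h i) →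
        xmin ∈ S3 n h a α ∧ ∀ x ∈ S3 n h a α, Maj xmin x) := by
  have hn2 : 2 ≤ n := by omega
  have hn0 : (0:ℝ) < n := by exact_mod_cast (by omega : 0 < n)
  constructor
  · -- case α ≥ a/n
    intro hαn xmin hxe
    subst hxe
    have hsc : ∑ _i : Fin n, a / n = a := by
      rw [Finset.sum_const, Finset.card_univ, Fintype.card_fin, nsmul_eq_mul]
      field_simp
    have hmem : (fun _ : Fin n => a / n) ∈ S3 n h a α := by
      exact ⟨⟨fun i j _ => le_refl _, fun i => by positivity, hsc⟩, fun i _ => hαn⟩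
    refine ⟨hmem, fun x hxS => ?_⟩
    obtain ⟨⟨hsort, hpos, hsum⟩, htail⟩ := hxS
    constructor
    · intro k hk1 hk2
      have hkn : k ≤ n := by omega
      have havg := psum_avg x hsort hkn (le_refl n)
      rw [psum_total, hsum] at havg
      rw [psum_const _ k hkn]
      calc (k:ℝ) * (a / n) = (k * a) / n := by ring
        _ ≤ psum x k := by rw [div_le_iff₀ hn0]; linarith
    · rw [hsc, hsum]
  · -- case α < a/n
    intro hαn xmin hxe
    have hh0 : (0:ℝ) < h := by exact_mod_cast hh
    set ρ := (a - ((n:ℝ) - h) * α) / h with hρdef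
    have hna : (n:ℝ) * α < a := by
      rw [lt_div_iff₀ hn0] at hαn; linarith
    have hhρ : (h:ℝ) * ρ = a - ((n:ℝ) - h) * α := by
      rw [hρdef]; field_simp
    have hρα : α ≤ ρ := by
      have hhn' : (h:ℝ) ≤ n := by exact_mod_cast (by omega : h ≤ n)
      rw [le_div_iff₀ hh0]
      nlinarith
    have hxm : xmin = fun i : Fin n => if (i:ℕ) < h then ρ else α := by
      rw [hxe]; funext i
      by_cases hih : (i:ℕ) < h <;> simp [sv, vv, hih]
    have hsum_min : ∑ i, (fun i : Fin n => if (i:ℕ) < h then ρ else α) i = a := by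
      rw [← psum_total, psum_piece h ρ α n (le_refl n),
        min_eq_right (by omega : h ≤ n)]
      have hnh : ((n - h : ℕ) : ℝ) = (n:ℝ) - h := by
        push_cast [Nat.cast_sub (by omega : h ≤ n)]; ring
      linarith [hhρ]
    have hmem : xmin ∈ S3 n h a α := by
      rw [hxm]
      refine ⟨⟨?_, ?_, hsum_min⟩, ?_⟩
      · intro i j hij
        by_cases hjh : (j:ℕ) < h
        · have hih : (i:ℕ) < h := by
            have := hij; rw [Fin.le_def] at this; omega
          simp [hjh, hih]
        · by_cases hih : (i:ℕ) < h <;> simp [hjh, hih, hρα]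
      · intro i
        by_cases hih : (i:ℕ) < h <;> simp [hih] <;> linarith
      · intro i hi
        simp [Nat.not_lt.mpr hi]
    refine ⟨hmem, fun x hxS => ?_⟩
    obtain ⟨⟨hsort, hpos, hsum⟩, htail⟩ := hxS
    constructor
    · intro k hk1 hk2
      have hkn : k ≤ n := by omega
      rw [hxm, psum_piece h ρ α k hkn]
      by_cases hkh : k ≤ h
      · rw [min_eq_left hkh]
        have hph : (h:ℝ) * ρ ≤ psum x h := by
          have htb := tail_bound x α htail (le_refl h) (by omega : h ≤ n)
          rw [hsum] at htb
          linarith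
        have havg := psum_avg x hsort hkh (by omega : h ≤ n)
        have hk0 : (0:ℝ) ≤ k := Nat.cast_nonneg k
        have hmul : (h:ℝ) * ((k:ℝ) * ρ) ≤ (h:ℝ) * psum x k := by nlinarith
        have := le_of_mul_le_mul_left hmul hh0
        linarith
      · rw [min_eq_right (by omega : h ≤ k)]
        have htb := tail_bound x α htail (by omega : h ≤ k) hkn
        rw [hsum] at htb
        linarith
    · rw [hxm, hsum_min, hsum]
end
end

section
/- Let k ≥ 2 and r ≥ 1 with rk − 2r + 2 ≥ 1, and let T be any tree with degree sequence consisting of r vertices of degree k and rk − 2r + 2 vertices of degree 1. Then the second Zagreb index of T equals S(T) = k(2kr − 2r − k + 2). -/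
open Finset

noncomputable section

/-- Degree of a vertex (with classical decidability of adjacency). -/
def deg {V : Type*} [Fintype V] (G : SimpleGraph V) (v : V) : ℕ :=
  letI := Classical.decEq V
  letI := Classical.decRel G.Adj
  G.degree v

/-- The finite set of edges of `G`. -/
def edgeF {V : Type*} [Fintype V] (G : SimpleGraph V) : Finset (Sym2 V) :=
  letI := Classical.decEq V
  letI := Classical.decRel G.Adj
  G.edgeFinset

/-- Sum of the degrees of the two endpoints of an edge. -/
def dsum {V : Type*} [Fintype V] (G : SimpleGraph V) : Sym2 V → ℝ :=
  Sym2.lift ⟨fun u v => (deg G u : ℝ) + deg G v, fun u v => by ring⟩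

/-- Product of the degrees of the two endpoints of an edge. -/
def dprod {V : Type*} [Fintype V] (G : SimpleGraph V) : Sym2 V → ℝ :=
  Sym2.lift ⟨fun u v => (deg G u : ℝ) * deg G v, fun u v => by ring⟩

/-- The second Zagreb index `S(G) = Σ_{(v_i,v_j) ∈ E} d_i d_j`. -/
def zagreb2 {V : Type*} [Fintype V] (G : SimpleGraph V) : ℝ :=
  ∑ e ∈ edgeF G, dprod G e

lemma deg_eq' {V : Type*} [Fintype V] [DecidableEq V] (G : SimpleGraph V) [DecidableRel G.Adj]
    (v : V) : deg G v = G.degree v := by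
  unfold deg; congr!

lemma edgeF_eq' {V : Type*} [Fintype V] [DecidableEq V] (G : SimpleGraph V) [DecidableRel G.Adj] :
    edgeF G = G.edgeFinset := by
  unfold edgeF; congr!

/-- In a connected graph containing a vertex of degree ≥ 2, there is no edge both of whose
endpoints have degree 1. -/
lemma no_leaf_leaf {V : Type*} [Fintype V] (T : SimpleGraph V) (hT : T.Connected)
    {u v w : V} (huv : T.Adj u v) (hu : deg T u = 1) (hv : deg T v = 1)
    (hw : 2 ≤ deg T w) : False := by
  classical
  rw [deg_eq'] at hu hv hw
  have hNu : ∀ b, T.Adj u b → b = v := by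
    intro b hb
    have h1 : b ∈ T.neighborFinset u := T.mem_neighborFinset u b |>.2 hb
    have h2 : v ∈ T.neighborFinset u := T.mem_neighborFinset u v |>.2 huv
    exact Finset.card_le_one.1 hu.le _ h1 _ h2
  have hNv : ∀ b, T.Adj v b → b = u := by
    intro b hb
    have h1 : b ∈ T.neighborFinset v := T.mem_neighborFinset v b |>.2 hb
    have h2 : u ∈ T.neighborFinset v := T.mem_neighborFinset v u |>.2 huv.symm
    exact Finset.card_le_one.1 hv.le _ h1 _ h2
  have key : ∀ (a b : V) (_ : T.Walk a b), a = u ∨ a = v → b = u ∨ b = v := by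
    intro a b p
    induction p with
    | nil => exact id
    | @cons x y z h p ih =>
      rintro (rfl | rfl)
      · exact ih (Or.inr (hNu _ h))
      · exact ih (Or.inl (hNv _ h))
  obtain ⟨p⟩ := hT.preconnected u w
  rcases key u w p (Or.inl rfl) with rfl | rfl
  · omega
  · omega

/-- Dart-counting identity: `Σ_{e∈E} (d_u + d_v) = Σ_v d_v²`. -/
lemma sum_dsum_eq {V : Type*} [Fintype V] (T : SimpleGraph V) :
    ∑ e ∈ edgeF T, dsum T e = ∑ v : V, (deg T v : ℝ) * deg T v := by
  classical
  rw [edgeF_eq']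
  have h1 : ∑ d : T.Dart, (deg T d.fst : ℝ)
      = ∑ e ∈ T.edgeFinset, ∑ d ∈ Finset.univ.filter (fun d : T.Dart => d.edge = e),
          (deg T d.fst : ℝ) := by
    rw [Finset.sum_fiberwise_of_maps_to]
    intro d _
    rw [SimpleGraph.mem_edgeFinset]; exact d.edge_mem
  have h2 : ∑ d : T.Dart, (deg T d.fst : ℝ)
      = ∑ v : V, ∑ d ∈ Finset.univ.filter (fun d : T.Dart => d.fst = v),
          (deg T d.fst : ℝ) :=
    (Finset.sum_fiberwise_of_maps_to (fun d _ => Finset.mem_univ d.fst) _).symm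
  have h3 : ∀ e ∈ T.edgeFinset,
      ∑ d ∈ Finset.univ.filter (fun d : T.Dart => d.edge = e), (deg T d.fst : ℝ)
        = dsum T e := by
    intro e he
    rw [SimpleGraph.mem_edgeFinset] at he
    induction e with
    | _ x y =>
      set d : T.Dart := ⟨(x, y), he⟩ with hd
      have hedge : d.edge = s(x, y) := rfl
      have hfib : (Finset.univ.filter (fun d' : T.Dart => d'.edge = s(x, y)))
          = {d, d.symm} := by
        rw [← hedge]
        exact d.edge_fiber
      rw [hfib, Finset.sum_pair d.symm_ne.symm]
      show (deg T x : ℝ) + deg T y = dsum T s(x, y)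
      simp [dsum]
  have h4 : ∀ v : V,
      ∑ d ∈ Finset.univ.filter (fun d : T.Dart => d.fst = v), (deg T d.fst : ℝ)
        = (deg T v : ℝ) * deg T v := by
    intro v
    have hc : ∀ d ∈ Finset.univ.filter (fun d : T.Dart => d.fst = v),
        (deg T d.fst : ℝ) = (deg T v : ℝ) := fun d hd => by
      rw [(Finset.mem_filter.1 hd).2]
    rw [Finset.sum_congr rfl hc, Finset.sum_const,
      T.dart_fst_fiber_card_eq_degree, ← deg_eq', nsmul_eq_mul]
  rw [Finset.sum_congr rfl h3] at h1
  rw [Finset.sum_congr rfl (fun v _ => h4 v)] at h2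
  rw [← h1, h2]

/-- Any tree with `r` vertices of degree `k` and `rk - 2r + 2` vertices of degree `1`
has second Zagreb index `k(2kr - 2r - k + 2)`. -/
theorem zagreb2_of_tree_regular_plus_pendants {V : Type*} [Fintype V]
    (T : SimpleGraph V) (hT : T.IsTree)
    (k r : ℕ) (hk : 2 ≤ k) (hr : 1 ≤ r) (hpos : 1 ≤ r * k - 2 * r + 2)
    (hdegs : ∀ v : V, deg T v = k ∨ deg T v = 1)
    (hck : (Finset.univ.filter fun v => deg T v = k).card = r)
    (hc1 : (Finset.univ.filter fun v => deg T v = 1).card = r * k - 2 * r + 2) :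
    zagreb2 T = (k : ℝ) * (2 * k * r - 2 * r - k + 2) := by
  classical
  -- a vertex of degree k
  obtain ⟨w, hwmem⟩ : ∃ w, w ∈ Finset.univ.filter fun v => deg T v = k := by
    apply Finset.card_pos.1; rw [hck]; omega
  have hwdeg : deg T w = k := (Finset.mem_filter.1 hwmem).2
  -- pointwise: dprod = k * dsum - k^2 on edges
  have hpt : ∀ e ∈ edgeF T, dprod T e = (k : ℝ) * dsum T e - (k : ℝ) ^ 2 := by
    intro e he
    rw [edgeF_eq', SimpleGraph.mem_edgeFinset] at he
    induction e with
    | _ x y =>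
      have hxy : T.Adj x y := he
      simp only [dprod, dsum, Sym2.lift_mk]
      rcases hdegs x with hx | hx <;> rcases hdegs y with hy | hy <;>
        rw [hx, hy]
      · ring
      · ring
      · ring
      · exact (no_leaf_leaf T hT.isConnected hxy hx hy
          (by rw [hwdeg]; exact hk)).elim
  -- vertex count
  have hfilter : Finset.univ.filter (fun v => ¬ deg T v = k)
      = Finset.univ.filter (fun v => deg T v = 1) := by
    apply Finset.filter_congr
    intro v _
    rcases hdegs v with h | h <;> simp [h] <;> omega
  have hcardV : Fintype.card V = r + (r * k - 2 * r + 2) := by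
    have h := Finset.card_filter_add_card_filter_not
      (s := (Finset.univ : Finset V)) (p := fun v => deg T v = k)
    rw [hfilter, hck, hc1, Finset.card_univ] at h
    omega
  -- edge count
  have hE : (edgeF T).card + 1 = Fintype.card V := by
    rw [edgeF_eq']; exact hT.card_edgeFinset
  -- sum of squared degrees
  have hsq : ∑ v : V, (deg T v : ℝ) * deg T v
      = (r : ℝ) * k ^ 2 + ((r * k - 2 * r + 2 : ℕ) : ℝ) := by
    rw [← Finset.sum_filter_add_sum_filter_not Finset.univ (fun v => deg T v = k), hfilter]
    congr 1
    · have hc : ∀ v ∈ Finset.univ.filter (fun v => deg T v = k),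
          (deg T v : ℝ) * deg T v = (k : ℝ) * k := fun v hv => by
        rw [(Finset.mem_filter.1 hv).2]
      rw [Finset.sum_congr rfl hc, Finset.sum_const, hck, nsmul_eq_mul]
      ring
    · have hc : ∀ v ∈ Finset.univ.filter (fun v => deg T v = 1),
          (deg T v : ℝ) * deg T v = (1 : ℝ) := fun v hv => by
        rw [(Finset.mem_filter.1 hv).2]; norm_num
      rw [Finset.sum_congr rfl hc, Finset.sum_const, hc1, nsmul_eq_mul, mul_one]
  have h2rk : 2 * r ≤ r * k := by
    calc 2 * r = r * 2 := by ring
    _ ≤ r * k := Nat.mul_le_mul_left r hk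
  have hmcast : ((r * k - 2 * r + 2 : ℕ) : ℝ) = r * k - 2 * r + 2 := by
    push_cast [h2rk]; ring
  have hEcard : ((edgeF T).card : ℝ) = (r : ℝ) * k - r + 1 := by
    have : (edgeF T).card = r + (r * k - 2 * r + 2) - 1 := by omega
    rw [this]
    have h1 : 1 ≤ r + (r * k - 2 * r + 2) := by omega
    push_cast [h1, h2rk]
    ring
  calc zagreb2 T = ∑ e ∈ edgeF T, ((k : ℝ) * dsum T e - (k : ℝ) ^ 2) :=
        Finset.sum_congr rfl hpt
    _ = (k : ℝ) * ∑ e ∈ edgeF T, dsum T e - (k : ℝ) ^ 2 * (edgeF T).card := by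
        rw [Finset.sum_sub_distrib, Finset.mul_sum, Finset.sum_const, nsmul_eq_mul]; ring
    _ = (k : ℝ) * ((r : ℝ) * k ^ 2 + ((r : ℝ) * k - 2 * r + 2))
          - (k : ℝ) ^ 2 * ((r : ℝ) * k - r + 1) := by
        rw [sum_dsum_eq, hsq, hmcast, hEcard]
    _ = (k : ℝ) * (2 * k * r - 2 * r - k + 2) := by ring
end
end
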